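/- arXiv:1203.4673 — 4 statements merged into one kernel-verified Lean document; each statement's English description precedes it below -/
import Mathlib

section
/- Y_∞ := sup_n Y_n is finite almost surely, and moreover E Y_∞ ≤ C(1 + E φ_1)/(1 − Ĉ). -/
open MeasureTheory ProbabilityTheory Filter

/-- `θ_n = η_n ∏_{i=1}^{n-1} min(η_i, 1)`. -/
noncomputable def thetaSeq {Ω : Type*} (η : ℕ → Ω → ℝ) (n : ℕ) (ω : Ω) : ℝ :=
  η n ω * ∏ i ∈ Finset.Ico 1 n, min (η i ω) 1

/-- `Y_n = max_{1 ≤ i ≤ n} θ_i (φ_i + 1)`. -/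
noncomputable def Yseq {Ω : Type*} (η φ : ℕ → Ω → ℝ) (n : ℕ) (ω : Ω) : ℝ :=
  sSup {r : ℝ | ∃ i, 1 ≤ i ∧ i ≤ n ∧ r = thetaSeq η i ω * (φ i ω + 1)}

/-- **Lemma (auxiliary maximal bound).**
Let `{η_n}_{n≥1}` and `{φ_n}_{n≥1}` be i.i.d. sequences of non-negative random variables,
independent between themselves, with `C = E η_1 < ∞` and `E φ_1 < ∞`.  Put
`η̂_n = min(η_n, 1)`, `Ĉ = E η̂_1` and assume `Ĉ < 1`.  With
`θ_n = η_n ∏_{i<n} η̂_i` and `Y_n = max_{i≤n} θ_i(φ_i+1)`, the supremum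
`Y_∞ = sup_n Y_n` is finite almost surely and `E Y_∞ ≤ C (1 + E φ_1)/(1 − Ĉ)`. -/
theorem lisa_markov_lemma
    {Ω : Type*} [MeasurableSpace Ω] (P : Measure Ω) [IsProbabilityMeasure P]
    (η φ : ℕ → Ω → ℝ)
    (hηmeas : ∀ n, Measurable (η n)) (hφmeas : ∀ n, Measurable (φ n))
    (hηnonneg : ∀ n ω, 0 ≤ η n ω) (hφnonneg : ∀ n ω, 0 ≤ φ n ω)
    -- mutual independence of the whole family {η_n} ∪ {φ_n}
    (hindep : ProbabilityTheory.iIndep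
      (fun i : ℕ ⊕ ℕ => match i with
        | Sum.inl n => MeasurableSpace.comap (η n) inferInstance
        | Sum.inr n => MeasurableSpace.comap (φ n) inferInstance) P)
    -- identical distributions within each sequence
    (hηiid : ∀ n m, 1 ≤ n → 1 ≤ m → Measure.map (η n) P = Measure.map (η m) P)
    (hφiid : ∀ n m, 1 ≤ n → 1 ≤ m → Measure.map (φ n) P = Measure.map (φ m) P)
    (hηint : Integrable (η 1) P) (hφint : Integrable (φ 1) P)
    (C Chat : ℝ)
    (hC : C = ∫ ω, η 1 ω ∂P) (hChat : Chat = ∫ ω, min (η 1 ω) 1 ∂P)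
    (hChat1 : Chat < 1) :
    (∀ᵐ ω ∂P, BddAbove (Set.range fun n => Yseq η φ n ω)) ∧
      ∫⁻ ω, ENNReal.ofReal (⨆ n, Yseq η φ n ω) ∂P ≤
        ENNReal.ofReal (C / (1 - Chat) * (1 + ∫ ω, φ 1 ω ∂P)) := by
  classical
  set m : ℕ ⊕ ℕ → MeasurableSpace Ω := (fun i : ℕ ⊕ ℕ => match i with
    | Sum.inl n => MeasurableSpace.comap (η n) inferInstance
    | Sum.inr n => MeasurableSpace.comap (φ n) inferInstance) with hm
  have hindep' : iIndep m P := hindep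
  have h_le : ∀ k, m k ≤ ‹MeasurableSpace Ω› := by
    rintro (n | n)
    · exact measurable_iff_comap_le.mp (hηmeas n)
    · exact measurable_iff_comap_le.mp (hφmeas n)
  -- splitting lemma
  have split : ∀ (S T : Set (ℕ ⊕ ℕ)), Disjoint S T →
      ∀ (f g : Ω → ENNReal), Measurable[⨆ k ∈ S, m k] f → Measurable[⨆ k ∈ T, m k] g →
      ∫⁻ ω, f ω * g ω ∂P = (∫⁻ ω, f ω ∂P) * ∫⁻ ω, g ω ∂P := by
    intro S T hST f g hf hg
    exact lintegral_mul_eq_lintegral_mul_lintegral_of_independent_measurableSpace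
      (iSup₂_le fun k _ => h_le k) (iSup₂_le fun k _ => h_le k)
      (indep_iSup_of_disjoint h_le hindep' hST) hf hg
  -- measurability of compositions w.r.t. the sup σ-algebras
  have memη : ∀ (F : ℝ → ENNReal), Measurable F → ∀ j (S : Set (ℕ ⊕ ℕ)), Sum.inl j ∈ S →
      Measurable[⨆ k ∈ S, m k] (fun ω => F (η j ω)) := by
    intro F hF j S hj
    have h1 : Measurable[m (Sum.inl j)] (η j) := Measurable.of_comap_le le_rfl
    exact (hF.comp h1).mono (le_iSup₂ (f := fun k (_ : k ∈ S) => m k) _ hj) le_rfl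
  have memφ : ∀ (F : ℝ → ENNReal), Measurable F → ∀ j (S : Set (ℕ ⊕ ℕ)), Sum.inr j ∈ S →
      Measurable[⨆ k ∈ S, m k] (fun ω => F (φ j ω)) := by
    intro F hF j S hj
    have h1 : Measurable[m (Sum.inr j)] (φ j) := Measurable.of_comap_le le_rfl
    exact (hF.comp h1).mono (le_iSup₂ (f := fun k (_ : k ∈ S) => m k) _ hj) le_rfl
  have hFmin : Measurable (fun x : ℝ => ENNReal.ofReal (min x 1)) :=
    (measurable_id.min measurable_const).ennreal_ofReal
  -- product of independent factors
  have prodInt : ∀ (s : Finset ℕ),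
      ∫⁻ ω, ∏ j ∈ s, ENNReal.ofReal (min (η j ω) 1) ∂P
        = ∏ j ∈ s, ∫⁻ ω, ENNReal.ofReal (min (η j ω) 1) ∂P := by
    intro s
    induction s using Finset.induction_on with
    | empty => simp
    | @insert a s ha ih =>
      have hdis : Disjoint ({Sum.inl a} : Set (ℕ ⊕ ℕ)) (Sum.inl '' (s : Set ℕ)) := by
        rw [Set.disjoint_singleton_left]
        rintro ⟨j, hj, hji⟩
        rw [Sum.inl.injEq] at hji
        exact ha (hji ▸ hj)
      have hf : Measurable[⨆ k ∈ ({Sum.inl a} : Set (ℕ ⊕ ℕ)), m k]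
          (fun ω => ENNReal.ofReal (min (η a ω) 1)) :=
        memη _ hFmin a _ rfl
      have hg : Measurable[⨆ k ∈ (Sum.inl '' (s : Set ℕ)), m k]
          (fun ω => ∏ j ∈ s, ENNReal.ofReal (min (η j ω) 1)) :=
        Finset.measurable_prod _ fun j hj =>
          memη _ hFmin j _ ⟨j, hj, rfl⟩
      simp_rw [Finset.prod_insert ha]
      rw [split _ _ hdis _ _ hf hg, ih]
  -- identically distributed computations
  have hIη : ∀ j, 1 ≤ j → ∫⁻ ω, ENNReal.ofReal (η j ω) ∂P = ENNReal.ofReal C := by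
    intro j hj
    have h1 : ∫⁻ ω, ENNReal.ofReal (η j ω) ∂P = ∫⁻ ω, ENNReal.ofReal (η 1 ω) ∂P := by
      rw [← lintegral_map ENNReal.measurable_ofReal (hηmeas j), hηiid j 1 hj le_rfl,
        lintegral_map ENNReal.measurable_ofReal (hηmeas 1)]
    rw [h1, hC, ofReal_integral_eq_lintegral_ofReal hηint (ae_of_all _ fun ω => hηnonneg 1 ω)]
  have hmin_int : Integrable (fun ω => min (η 1 ω) 1) P := hηint.inf (integrable_const 1)
  have hIc : ∀ j, 1 ≤ j →
      ∫⁻ ω, ENNReal.ofReal (min (η j ω) 1) ∂P = ENNReal.ofReal Chat := by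
    intro j hj
    have h1 : ∫⁻ ω, ENNReal.ofReal (min (η j ω) 1) ∂P
        = ∫⁻ ω, ENNReal.ofReal (min (η 1 ω) 1) ∂P := by
      rw [← lintegral_map hFmin (hηmeas j), hηiid j 1 hj le_rfl,
        lintegral_map hFmin (hηmeas 1)]
    rw [h1, hChat, ofReal_integral_eq_lintegral_ofReal hmin_int
      (ae_of_all _ fun ω => le_min (hηnonneg 1 ω) zero_le_one)]
  have hφ1_int : Integrable (fun ω => φ 1 ω + 1) P := hφint.add (integrable_const 1)
  have hFφ : Measurable (fun x : ℝ => ENNReal.ofReal (x + 1)) :=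
    (measurable_id.add_const 1).ennreal_ofReal
  have hIφ : ∀ j, 1 ≤ j →
      ∫⁻ ω, ENNReal.ofReal (φ j ω + 1) ∂P = ENNReal.ofReal (1 + ∫ ω, φ 1 ω ∂P) := by
    intro j hj
    have h1 : ∫⁻ ω, ENNReal.ofReal (φ j ω + 1) ∂P
        = ∫⁻ ω, ENNReal.ofReal (φ 1 ω + 1) ∂P := by
      rw [← lintegral_map hFφ (hφmeas j), hφiid j 1 hj le_rfl,
        lintegral_map hFφ (hφmeas 1)]
    rw [h1, ← ofReal_integral_eq_lintegral_ofReal hφ1_int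
      (ae_of_all _ fun ω => by simp only [Pi.zero_apply]; have := hφnonneg 1 ω; linarith)]
    congr 1
    rw [integral_add hφint (integrable_const 1)]
    simp [add_comm]
  -- nonnegativities
  have hθ0 : ∀ i ω, 0 ≤ thetaSeq η i ω := fun i ω =>
    mul_nonneg (hηnonneg i ω)
      (Finset.prod_nonneg fun j _ => le_min (hηnonneg j ω) zero_le_one)
  have hterm0 : ∀ i ω, 0 ≤ thetaSeq η i ω * (φ i ω + 1) := fun i ω =>
    mul_nonneg (hθ0 i ω) (by have := hφnonneg i ω; linarith)
  -- the main per-index expectation computation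
  have hθexp : ∀ i, 1 ≤ i →
      ∫⁻ ω, ENNReal.ofReal (thetaSeq η i ω * (φ i ω + 1)) ∂P
        = ENNReal.ofReal C * ENNReal.ofReal Chat ^ (i - 1)
            * ENNReal.ofReal (1 + ∫ ω, φ 1 ω ∂P) := by
    intro i hi
    have hpt : ∀ ω, ENNReal.ofReal (thetaSeq η i ω * (φ i ω + 1))
        = (ENNReal.ofReal (η i ω) * ∏ j ∈ Finset.Ico 1 i, ENNReal.ofReal (min (η j ω) 1))
            * ENNReal.ofReal (φ i ω + 1) := by
      intro ω
      rw [ENNReal.ofReal_mul (hθ0 i ω), thetaSeq,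
        ENNReal.ofReal_mul (hηnonneg i ω),
        ENNReal.ofReal_prod_of_nonneg fun j _ => le_min (hηnonneg j ω) zero_le_one]
    have hdis1 : Disjoint (Sum.inl '' Set.Iic i) ({Sum.inr i} : Set (ℕ ⊕ ℕ)) := by
      rw [Set.disjoint_singleton_right]
      rintro ⟨j, -, hji⟩
      cases hji
    have hf1 : Measurable[⨆ k ∈ (Sum.inl '' Set.Iic i), m k]
        (fun ω => ENNReal.ofReal (η i ω)
          * ∏ j ∈ Finset.Ico 1 i, ENNReal.ofReal (min (η j ω) 1)) := by
      refine Measurable.mul ?_ ?_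
      · exact memη _ ENNReal.measurable_ofReal i _ ⟨i, Set.mem_Iic.mpr le_rfl, rfl⟩
      · exact Finset.measurable_prod _ fun j hj =>
          memη _ hFmin j _ ⟨j, Set.mem_Iic.mpr (Finset.mem_Ico.mp hj).2.le, rfl⟩
    have hg1 : Measurable[⨆ k ∈ ({Sum.inr i} : Set (ℕ ⊕ ℕ)), m k]
        (fun ω => ENNReal.ofReal (φ i ω + 1)) := memφ _ hFφ i _ rfl
    have hdis2 : Disjoint ({Sum.inl i} : Set (ℕ ⊕ ℕ))
        (Sum.inl '' ((Finset.Ico 1 i : Finset ℕ) : Set ℕ)) := by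
      rw [Set.disjoint_singleton_left]
      rintro ⟨j, hj, hji⟩
      rw [Sum.inl.injEq] at hji
      rw [hji] at hj
      simp only [Finset.coe_Ico, Set.mem_Ico] at hj
      exact absurd hj.2 (lt_irrefl i)
    have hf2 : Measurable[⨆ k ∈ ({Sum.inl i} : Set (ℕ ⊕ ℕ)), m k]
        (fun ω => ENNReal.ofReal (η i ω)) :=
      memη _ ENNReal.measurable_ofReal i _ rfl
    have hg2 : Measurable[⨆ k ∈ (Sum.inl '' ((Finset.Ico 1 i : Finset ℕ) : Set ℕ)), m k]
        (fun ω => ∏ j ∈ Finset.Ico 1 i, ENNReal.ofReal (min (η j ω) 1)) :=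
      Finset.measurable_prod _ fun j hj => memη _ hFmin j _ ⟨j, hj, rfl⟩
    calc ∫⁻ ω, ENNReal.ofReal (thetaSeq η i ω * (φ i ω + 1)) ∂P
        = ∫⁻ ω, (ENNReal.ofReal (η i ω)
            * ∏ j ∈ Finset.Ico 1 i, ENNReal.ofReal (min (η j ω) 1))
            * ENNReal.ofReal (φ i ω + 1) ∂P := by simp_rw [hpt]
      _ = (∫⁻ ω, ENNReal.ofReal (η i ω)
            * ∏ j ∈ Finset.Ico 1 i, ENNReal.ofReal (min (η j ω) 1) ∂P)
            * ∫⁻ ω, ENNReal.ofReal (φ i ω + 1) ∂P := split _ _ hdis1 _ _ hf1 hg1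
      _ = ((∫⁻ ω, ENNReal.ofReal (η i ω) ∂P)
            * ∫⁻ ω, ∏ j ∈ Finset.Ico 1 i, ENNReal.ofReal (min (η j ω) 1) ∂P)
            * ∫⁻ ω, ENNReal.ofReal (φ i ω + 1) ∂P := by
          rw [split _ _ hdis2 _ _ hf2 hg2]
      _ = ENNReal.ofReal C * ENNReal.ofReal Chat ^ (i - 1)
            * ENNReal.ofReal (1 + ∫ ω, φ 1 ω ∂P) := by
          rw [hIη i hi, hIφ i hi, prodInt]
          congr 2
          rw [Finset.prod_congr rfl fun j hj => hIc j (Finset.mem_Ico.mp hj).1,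
            Finset.prod_const, Nat.card_Ico]
  -- the dominating series
  set g : ℕ → Ω → ENNReal :=
    fun n ω => ENNReal.ofReal (thetaSeq η (n + 1) ω * (φ (n + 1) ω + 1)) with hg
  have hgmeas : ∀ n, Measurable (g n) := by
    intro n
    exact (((hηmeas (n + 1)).mul
      (Finset.measurable_prod _ fun j _ => (hηmeas j).min measurable_const)).mul
      ((hφmeas (n + 1)).add_const 1)).ennreal_ofReal
  set T : Ω → ENNReal := fun ω => ∑' n, g n ω with hTdef
  have hTmeas : Measurable T := Measurable.ennreal_tsum hgmeas
  have h0C : 0 ≤ C := hC ▸ integral_nonneg fun ω => hηnonneg 1 ω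
  have h0Chat : 0 ≤ Chat := hChat ▸ integral_nonneg fun ω => le_min (hηnonneg 1 ω) zero_le_one
  have h0φ : 0 ≤ ∫ ω, φ 1 ω ∂P := integral_nonneg fun ω => hφnonneg 1 ω
  have hq1 : ENNReal.ofReal Chat < 1 := by
    rw [← ENNReal.ofReal_one]
    exact (ENNReal.ofReal_lt_ofReal_iff zero_lt_one).mpr hChat1
  have hTint : ∫⁻ ω, T ω ∂P
      = ENNReal.ofReal (C / (1 - Chat) * (1 + ∫ ω, φ 1 ω ∂P)) := by
    rw [hTdef]
    rw [lintegral_tsum fun n => (hgmeas n).aemeasurable]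
    have hterm : ∀ n : ℕ, ∫⁻ ω, g n ω ∂P
        = ENNReal.ofReal Chat ^ n
          * (ENNReal.ofReal C * ENNReal.ofReal (1 + ∫ ω, φ 1 ω ∂P)) := by
      intro n
      rw [hg]
      simp only []
      rw [hθexp (n + 1) (Nat.le_add_left 1 n), Nat.add_sub_cancel]
      ring
    simp_rw [hterm]
    rw [ENNReal.tsum_mul_right, ENNReal.tsum_geometric]
    have h1mq : (1 : ENNReal) - ENNReal.ofReal Chat = ENNReal.ofReal (1 - Chat) := by
      rw [ENNReal.ofReal_sub _ h0Chat, ENNReal.ofReal_one]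
    rw [h1mq, ← ENNReal.ofReal_inv_of_pos (by linarith : (0:ℝ) < 1 - Chat)]
    rw [← ENNReal.ofReal_mul h0C,
      ← ENNReal.ofReal_mul (inv_nonneg.mpr (by linarith : (0:ℝ) ≤ 1 - Chat))]
    congr 1
    rw [div_eq_mul_inv]
    ring
  have hTne : ∫⁻ ω, T ω ∂P ≠ ⊤ := by rw [hTint]; exact ENNReal.ofReal_ne_top
  have hTfin : ∀ᵐ ω ∂P, T ω < ⊤ := ae_lt_top hTmeas hTne
  -- pointwise bounds on the finite-T set
  have hYle : ∀ ω, T ω < ⊤ → ∀ n, Yseq η φ n ω ≤ (T ω).toReal := by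
    intro ω hω n
    apply Real.sSup_le
    · rintro r ⟨i, hi1, hin, rfl⟩
      have hle : ENNReal.ofReal (thetaSeq η i ω * (φ i ω + 1)) ≤ T ω := by
        have h := ENNReal.le_tsum (f := fun n => g n ω) (i - 1)
        have h2 : g (i - 1) ω = ENNReal.ofReal (thetaSeq η i ω * (φ i ω + 1)) := by
          rw [hg]
          simp only []
          rw [Nat.sub_add_cancel hi1]
        rw [h2] at h
        exact h
      calc thetaSeq η i ω * (φ i ω + 1)
          = (ENNReal.ofReal (thetaSeq η i ω * (φ i ω + 1))).toReal :=
            (ENNReal.toReal_ofReal (hterm0 i ω)).symm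
        _ ≤ (T ω).toReal := ENNReal.toReal_mono hω.ne hle
    · exact ENNReal.toReal_nonneg
  constructor
  · filter_upwards [hTfin] with ω hω
    exact ⟨(T ω).toReal, by rintro x ⟨n, rfl⟩; exact hYle ω hω n⟩
  · have hae : ∀ᵐ ω ∂P, ENNReal.ofReal (⨆ n, Yseq η φ n ω) ≤ T ω := by
      filter_upwards [hTfin] with ω hω
      have h1 : (⨆ n, Yseq η φ n ω) ≤ (T ω).toReal := ciSup_le (hYle ω hω)
      calc ENNReal.ofReal (⨆ n, Yseq η φ n ω) ≤ ENNReal.ofReal ((T ω).toReal) :=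
            ENNReal.ofReal_le_ofReal h1
        _ = T ω := ENNReal.ofReal_toReal hω.ne
    calc ∫⁻ ω, ENNReal.ofReal (⨆ n, Yseq η φ n ω) ∂P ≤ ∫⁻ ω, T ω ∂P :=
          lintegral_mono_ae hae
      _ = ENNReal.ofReal (C / (1 - Chat) * (1 + ∫ ω, φ 1 ω ∂P)) := hTint
end

section
/- For finitely many pairs of probability measures F_1,…,F_m and G_1,…,G_m on a metric space and non-negative weights α_1,…,α_m, the Lévy–Prokhorov distance satisfies ρ(∑_{k=1}^m α_k F_k, ∑_{k=1}^m α_k G_k) ≤ max(1, ∑_{k=1}^m α_k) · max_{1≤k≤m} ρ(F_k, G_k). -/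
open MeasureTheory Metric ENNReal

lemma mixture_meas_le_aux
    {X : Type*} [MetricSpace X] [MeasurableSpace X] [BorelSpace X]
    {m : ℕ} (F G : Fin m → Measure X) (α : Fin m → ℝ)
    {c ε : ENNReal} (hc : ∀ k, levyProkhorovEDist (F k) (G k) < c) (hcε : c ≤ ε)
    (hεtop : ε ≠ ⊤) (hsum : (∑ k, ENNReal.ofReal (α k)) * c ≤ ε)
    {B : Set X} (hB : MeasurableSet B) :
    (∑ k, ENNReal.ofReal (α k) • F k) B ≤
      (∑ k, ENNReal.ofReal (α k) • G k) (thickening ε.toReal B) + ε := by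
  have hthick : thickening c.toReal B ⊆ thickening ε.toReal B :=
    thickening_mono (ENNReal.toReal_mono hεtop hcε) B
  calc (∑ k, ENNReal.ofReal (α k) • F k) B
      = ∑ k, ENNReal.ofReal (α k) * F k B := by
        simp [Measure.finset_sum_apply, Measure.smul_apply, smul_eq_mul]
    _ ≤ ∑ k, ENNReal.ofReal (α k) * (G k (thickening c.toReal B) + c) := by
        refine Finset.sum_le_sum fun k _ => mul_le_mul_right ?_ _
        exact left_measure_le_of_levyProkhorovEDist_lt (hc k) hB
    _ = (∑ k, ENNReal.ofReal (α k) * G k (thickening c.toReal B)) +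
          (∑ k, ENNReal.ofReal (α k)) * c := by
        simp [mul_add, Finset.sum_add_distrib, Finset.sum_mul]
    _ ≤ (∑ k, ENNReal.ofReal (α k) • G k) (thickening ε.toReal B) + ε := by
        refine add_le_add ?_ hsum
        simp only [Measure.finset_sum_apply, Measure.smul_apply, smul_eq_mul]
        exact Finset.sum_le_sum fun k _ => mul_le_mul_right (measure_mono hthick) _

/-- **Subadditivity of the Lévy–Prokhorov distance under mixtures.**
For probability measures `F_1,…,F_m`, `G_1,…,G_m` on a metric space and non-negative
weights `α_1,…,α_m`, one has
`ρ(∑ α_k F_k, ∑ α_k G_k) ≤ max(1, ∑ α_k) · max_k ρ(F_k, G_k)`. -/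
theorem levyProkhorov_mixture_bound
    {X : Type*} [MetricSpace X] [MeasurableSpace X] [BorelSpace X]
    (m : ℕ) (hm : 0 < m)
    (F G : Fin m → Measure X)
    (hF : ∀ k, IsProbabilityMeasure (F k)) (hG : ∀ k, IsProbabilityMeasure (G k))
    (α : Fin m → ℝ) (hα : ∀ k, 0 ≤ α k) :
    levyProkhorovDist (∑ k, ENNReal.ofReal (α k) • F k) (∑ k, ENNReal.ofReal (α k) • G k) ≤
      max 1 (∑ k, α k) *
        Finset.univ.sup' (Finset.univ_nonempty_iff.mpr ⟨⟨0, hm⟩⟩)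
          (fun k => levyProkhorovDist (F k) (G k)) := by
  set M := Finset.univ.sup' (Finset.univ_nonempty_iff.mpr ⟨⟨0, hm⟩⟩)
      (fun k => levyProkhorovDist (F k) (G k)) with hMdef
  set S := max 1 (∑ k, α k) with hSdef
  have hM0 : 0 ≤ M := le_trans ENNReal.toReal_nonneg
    (Finset.le_sup' (fun k => levyProkhorovDist (F k) (G k)) (Finset.mem_univ ⟨0, hm⟩))
  have hS1 : (1 : ℝ) ≤ S := le_max_left _ _
  have hSM0 : 0 ≤ S * M := mul_nonneg (le_trans zero_le_one hS1) hM0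
  have hedist_le : ∀ k, levyProkhorovEDist (F k) (G k) ≤ ENNReal.ofReal M := by
    intro k
    rw [← ENNReal.ofReal_toReal (levyProkhorovEDist_ne_top (F k) (G k))]
    exact ENNReal.ofReal_le_ofReal
      (Finset.le_sup' (fun k => levyProkhorovDist (F k) (G k)) (Finset.mem_univ k))
  have key : levyProkhorovEDist (∑ k, ENNReal.ofReal (α k) • F k)
      (∑ k, ENNReal.ofReal (α k) • G k) ≤ ENNReal.ofReal (S * M) := by
    apply levyProkhorovEDist_le_of_forall
    intro ε B hδε hεtop hB
    set d : ENNReal := ENNReal.ofReal (∑ k, α k) + 1 with hd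
    set η : ENNReal := ε - ENNReal.ofReal (S * M) with hη
    have hη0 : 0 < η := tsub_pos_of_lt hδε
    have hdiv0 : 0 < η / d := ENNReal.div_pos hη0.ne' (by finiteness)
    set c : ENNReal := ENNReal.ofReal M + η / d with hcdef
    have hc : ∀ k, levyProkhorovEDist (F k) (G k) < c := fun k =>
      lt_of_le_of_lt (hedist_le k) (ENNReal.lt_add_right ENNReal.ofReal_ne_top hdiv0.ne')
    have h1d : (1 : ENNReal) ≤ d := le_add_self
    have hdivη : η / d ≤ η := ENNReal.div_le_of_le_mul (le_mul_of_one_le_right zero_le h1d)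
    have hδε' : ENNReal.ofReal (S * M) + η = ε := add_tsub_cancel_of_le hδε.le
    have hcε : c ≤ ε := by
      calc c ≤ ENNReal.ofReal (S * M) + η := by
            refine add_le_add (ENNReal.ofReal_le_ofReal ?_) hdivη
            exact le_mul_of_one_le_left hM0 hS1
        _ = ε := hδε'
    have hsum : (∑ k, ENNReal.ofReal (α k)) * c ≤ ε := by
      rw [← ENNReal.ofReal_sum_of_nonneg (fun k _ => hα k), hcdef, mul_add]
      have h1 : ENNReal.ofReal (∑ k, α k) * ENNReal.ofReal M ≤ ENNReal.ofReal (S * M) := by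
        rw [← ENNReal.ofReal_mul (Finset.sum_nonneg fun k _ => hα k)]
        exact ENNReal.ofReal_le_ofReal (mul_le_mul_of_nonneg_right (le_max_right _ _) hM0)
      have h2 : ENNReal.ofReal (∑ k, α k) * (η / d) ≤ η :=
        le_trans (mul_le_mul_left (le_add_right le_rfl) _) ENNReal.mul_div_le
      calc _ ≤ ENNReal.ofReal (S * M) + η := add_le_add h1 h2
        _ = ε := hδε'
    refine ⟨mixture_meas_le_aux F G α hc hcε hεtop.ne hsum hB, ?_⟩
    exact mixture_meas_le_aux G F α
      (fun k => (levyProkhorovEDist_comm (F k) (G k)) ▸ hc k) hcε hεtop.ne hsum hB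
  calc levyProkhorovDist (∑ k, ENNReal.ofReal (α k) • F k) (∑ k, ENNReal.ofReal (α k) • G k)
      ≤ (ENNReal.ofReal (S * M)).toReal := ENNReal.toReal_mono ENNReal.ofReal_ne_top key
    _ = S * M := ENNReal.toReal_ofReal hSM0
end

section
/- In the Polya urn scheme started with one black and one white ball, the proportion of black balls after n steps converges almost surely as n → ∞ to a random variable which is uniformly distributed on [0,1] (i.e. Beta(1,1) distributed). -/
open MeasureTheory ProbabilityTheory Filter

open Set
open scoped ENNReal

set_option linter.unusedSectionVars false
set_option linter.unusedVariables false
set_option maxHeartbeats 1000000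

namespace PolyaUrnAux

variable {Ω : Type*} [MeasurableSpace Ω] {P : Measure Ω} [IsProbabilityMeasure P]

lemma integrable_of_bdd {f : Ω → ℝ} (hf : Measurable f) {C : ℝ} (h : ∀ ω, |f ω| ≤ C) :
    Integrable f P :=
  (integrable_const C).mono' hf.aestronglyMeasurable
    (Eventually.of_forall fun ω => by simpa [Real.norm_eq_abs] using h ω)

lemma measure_lt_of_unif {V : Ω → ℝ} (hV : Measurable V)
    (hlaw : Measure.map V P = volume.restrict (Set.Icc (0:ℝ) 1)) {c : ℝ} (h0 : 0 ≤ c)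
    (h1 : c ≤ 1) : P {ω | V ω < c} = ENNReal.ofReal c := by
  have h : {ω | V ω < c} = V ⁻¹' (Set.Iio c) := rfl
  rw [h, ← Measure.map_apply hV measurableSet_Iio, hlaw,
    Measure.restrict_apply measurableSet_Iio]
  have h2 : Set.Iio c ∩ Set.Icc (0:ℝ) 1 = Set.Ico 0 c := by
    ext x
    simp only [Set.mem_inter_iff, Set.mem_Iio, Set.mem_Icc, Set.mem_Ico]
    exact ⟨fun h => ⟨h.2.1, h.1⟩, fun h => ⟨h.2, h.1, le_trans h.2.le h1⟩⟩
  rw [h2, Real.volume_Ico, sub_zero]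

lemma measure_ge_of_unif {V : Ω → ℝ} (hV : Measurable V)
    (hlaw : Measure.map V P = volume.restrict (Set.Icc (0:ℝ) 1)) {c : ℝ} (h0 : 0 ≤ c)
    (h1 : c ≤ 1) : P {ω | ¬ V ω < c} = ENNReal.ofReal (1 - c) := by
  have h : {ω | ¬ V ω < c} = V ⁻¹' (Set.Ici c) := by
    ext ω; simp [not_lt]
  rw [h, ← Measure.map_apply hV measurableSet_Ici, hlaw,
    Measure.restrict_apply measurableSet_Ici]
  have h2 : Set.Ici c ∩ Set.Icc (0:ℝ) 1 = Set.Icc c 1 := by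
    ext x
    simp only [Set.mem_inter_iff, Set.mem_Ici, Set.mem_Icc]
    exact ⟨fun h => ⟨h.1, h.2.2⟩, fun h => ⟨h.1, le_trans h0 h.1, h.2⟩⟩
  rw [h2, Real.volume_Icc]

lemma ennreal_aux (a b : ℕ) (ha : a ≠ 0) (hb : 0 < b) :
    ((a : ℝ≥0∞))⁻¹ * ENNReal.ofReal ((a : ℝ) / (b : ℝ)) = ((b : ℝ≥0∞))⁻¹ := by
  rw [ENNReal.ofReal_div_of_pos (by exact_mod_cast hb), ENNReal.ofReal_natCast,
    ENNReal.ofReal_natCast, div_eq_mul_inv, ← mul_assoc,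
    ENNReal.inv_mul_cancel (by exact_mod_cast ha) (by simp), one_mul]

lemma cast_mul_inv_eq (k m : ℕ) (hm : m ≠ 0) :
    (k : ℝ≥0∞) * ((m : ℝ≥0∞))⁻¹ = ENNReal.ofReal ((k : ℝ) / (m : ℝ)) := by
  rw [ENNReal.ofReal_div_of_pos (by exact_mod_cast Nat.pos_of_ne_zero hm),
    ENNReal.ofReal_natCast, ENNReal.ofReal_natCast, div_eq_mul_inv]

lemma polya_martingale (U : ℕ → Ω → ℝ) (hUmeas : ∀ n, Measurable (U n))
    (hUlaw : ∀ n, Measure.map (U n) P = volume.restrict (Set.Icc (0 : ℝ) 1))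
    (B : ℕ → Ω → ℕ)
    (hBrec : ∀ n ω, B (n + 1) ω =
      if U (n + 1) ω < (B n ω : ℝ) / (n + 2) then B n ω + 1 else B n ω)
    (hBub : ∀ n ω, 1 ≤ B n ω ∧ B n ω ≤ n + 1)
    (ℱ : Filtration ℕ ‹MeasurableSpace Ω›)
    (hBadp : ∀ n, Measurable[ℱ n] (B n))
    (hUadp : ∀ n, Measurable[ℱ n] (U n))
    (hindep : ∀ n, Indep (ℱ n) (MeasurableSpace.comap (U (n + 1)) inferInstance) P) :
    Martingale (fun n ω => (B n ω : ℝ) / (n + 2)) ℱ P := by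
  classical
  set M : ℕ → Ω → ℝ := fun n ω => (B n ω : ℝ) / (n + 2) with hM
  have hM01 : ∀ n ω, 0 ≤ M n ω ∧ M n ω ≤ 1 := by
    intro n ω
    have h1 := (hBub n ω).1
    have h2 := (hBub n ω).2
    refine ⟨by positivity, ?_⟩
    rw [hM, div_le_one (by positivity)]
    have : (B n ω : ℝ) ≤ (n : ℝ) + 1 := by exact_mod_cast h2
    linarith
  have hMadp : ∀ n, Measurable[ℱ n] (M n) := fun n =>
    (measurable_from_top.comp (hBadp n)).div_const _
  have hMmeas : ∀ n, Measurable (M n) := fun n => (hMadp n).mono (ℱ.le n) le_rfl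
  have hMint : ∀ n, Integrable (M n) P := fun n =>
    integrable_of_bdd (hMmeas n) (C := 1) fun ω => by
      rw [abs_of_nonneg (hM01 n ω).1]; exact (hM01 n ω).2
  refine martingale_nat (fun n => (hMadp n).stronglyMeasurable) hMint fun n => ?_
  haveI : SigmaFinite (P.trim (ℱ.le n)) := by
    have : IsFiniteMeasure (P.trim (ℱ.le n)) := isFiniteMeasure_trim _
    infer_instance
  -- the indicator functions
  set f : ℕ → Ω → ℝ := fun k ω => if B n ω = k then (1:ℝ) else 0 with hf
  set g : ℕ → Ω → ℝ := fun k ω => if U (n+1) ω < (k : ℝ) / (n + 2) then (1:ℝ) else 0 with hg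
  have hfSM : ∀ k, StronglyMeasurable[ℱ n] (f k) := by
    intro k
    have : MeasurableSet[ℱ n] {ω | B n ω = k} := hBadp n (measurableSet_singleton k)
    exact (stronglyMeasurable_const.ite this stronglyMeasurable_const)
  have hgmeas : ∀ k, Measurable (g k) := by
    intro k
    have : MeasurableSet {ω | U (n+1) ω < (k:ℝ)/(n+2)} :=
      measurableSet_lt (hUmeas (n+1)) measurable_const
    exact measurable_const.ite this measurable_const
  have hgint : ∀ k, Integrable (g k) P := fun k =>
    integrable_of_bdd (hgmeas k) (C := 1) fun ω => by rw [hg]; dsimp only; split <;> simp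
  have hfgint : ∀ k, Integrable (fun ω => f k ω * g k ω) P := by
    intro k
    refine integrable_of_bdd ?_ (C := 1) fun ω => ?_
    · have hfm : Measurable (f k) := by
        have : MeasurableSet {ω | B n ω = k} :=
          ((hBadp n).mono (ℱ.le n) le_rfl) (measurableSet_singleton k)
        exact measurable_const.ite this measurable_const
      exact hfm.mul (hgmeas k)
    · rw [hf, hg]; dsimp only; split <;> split <;> simp
  -- conditional expectation of g k
  have hgSM : ∀ k, StronglyMeasurable[MeasurableSpace.comap (U (n+1)) inferInstance] (g k) := by
    intro k
    have hU' : Measurable[MeasurableSpace.comap (U (n+1)) inferInstance] (U (n+1)) :=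
      Measurable.of_comap_le le_rfl
    have : Measurable (fun x : ℝ => if x < (k:ℝ)/(n+2) then (1:ℝ) else 0) :=
      measurable_const.ite measurableSet_Iio measurable_const
    exact (this.comp hU').stronglyMeasurable
  have hgcond : ∀ k ≤ n + 1, (P[g k | ℱ n]) =ᵐ[P] fun _ => (k:ℝ)/(n+2) := by
    intro k hk
    have hint : ∫ ω, g k ω ∂P = (k:ℝ)/(n+2) := by
      have hk0 : (0:ℝ) ≤ (k:ℝ)/(n+2) := by positivity
      have hk1 : (k:ℝ)/(n+2) ≤ 1 := by
        rw [div_le_one (by positivity)]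
        have : (k:ℝ) ≤ (n:ℝ) + 1 := by exact_mod_cast hk
        linarith
      have : g k = Set.indicator {ω | U (n+1) ω < (k:ℝ)/(n+2)} (fun _ => (1:ℝ)) := by
        funext ω
        rw [hg, Set.indicator_apply]
        simp [Set.mem_setOf_eq]
      rw [this, integral_indicator_const _ (measurableSet_lt (hUmeas (n+1)) measurable_const),
        measureReal_def, measure_lt_of_unif (hUmeas (n+1)) (hUlaw (n+1)) hk0 hk1, smul_eq_mul, mul_one,
        ENNReal.toReal_ofReal hk0]
    have := condExp_indep_eq (μ := P) ((hUmeas (n+1)).comap_le) (ℱ.le n) (hgSM k)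
      ((hindep n).symm)
    rw [hint] at this
    exact this
  -- conditional expectation of f k * g k
  have hfgcond : ∀ k ≤ n + 1, (P[fun ω => f k ω * g k ω | ℱ n])
      =ᵐ[P] fun ω => f k ω * ((k:ℝ)/(n+2)) := by
    intro k hk
    have h1 : (P[fun ω => f k ω * g k ω | ℱ n]) =ᵐ[P] fun ω => f k ω * (P[g k | ℱ n]) ω := by
      have := condExp_stronglyMeasurable_mul_of_bound (μ := P) (ℱ.le n) (hfSM k) (hgint k) 1
        (Eventually.of_forall fun ω => by rw [hf]; dsimp only; split <;> simp)
      exact this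
    refine h1.trans ?_
    filter_upwards [hgcond k hk] with ω hω
    rw [hω]
  -- decompose B (n+1)
  set D : Ω → ℝ := fun ω => ∑ k ∈ Finset.range (n+2), f k ω * g k ω with hD
  have hDdec : ∀ ω, (B (n+1) ω : ℝ) = (B n ω : ℝ) + D ω := by
    intro ω
    have hmem : B n ω ∈ Finset.range (n+2) := by
      have := (hBub n ω).2; simp only [Finset.mem_range]; omega
    have hDval : D ω = if U (n+1) ω < (B n ω : ℝ)/(n+2) then (1:ℝ) else 0 := by
      rw [hD]
      dsimp only
      rw [Finset.sum_eq_single (B n ω)]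
      · rw [hf, hg]; simp
      · intro b _ hb
        rw [hf]; simp only []
        rw [if_neg (fun h => hb h.symm), zero_mul]
      · intro h; exact absurd hmem h
    rw [hBrec n ω, hDval]
    split <;> push_cast <;> ring
  -- the conditional expectation computation
  symm
  have hbbint : Integrable (fun ω => (B n ω : ℝ)) P := by
    refine integrable_of_bdd (measurable_from_top.comp ((hBadp n).mono (ℱ.le n) le_rfl))
      (C := (n:ℝ)+1) fun ω => ?_
    rw [abs_of_nonneg (by positivity)]
    exact_mod_cast (hBub n ω).2
  have hDint : Integrable D P := integrable_finset_sum _ fun k _ => hfgint k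
  have hMeq : M (n+1) = ((n:ℝ)+3)⁻¹ • ((fun ω => (B n ω : ℝ)) + D) := by
    funext ω
    rw [hM]
    simp only [Pi.smul_apply, Pi.add_apply, smul_eq_mul]
    rw [← hDdec ω]
    push_cast
    ring
  calc P[M (n+1) | ℱ n]
      =ᵐ[P] ((n:ℝ)+3)⁻¹ • P[(fun ω => (B n ω : ℝ)) + D | ℱ n] := by
        rw [hMeq]; exact condExp_smul _ _ _
    _ =ᵐ[P] M n := by
        have hadd := condExp_add (μ := P) (m := ℱ n) hbbint hDint
        have hbb : P[(fun ω => (B n ω : ℝ)) | ℱ n] =ᵐ[P] fun ω => (B n ω : ℝ) := by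
          rw [condExp_of_stronglyMeasurable (ℱ.le n)
            (f := fun ω => (B n ω : ℝ))
            ((measurable_from_top.comp (hBadp n)).stronglyMeasurable) hbbint]
        have hDsum : P[D | ℱ n] =ᵐ[P] fun ω => (B n ω : ℝ)/(n+2) := by
          have h1 : P[D | ℱ n] =ᵐ[P] ∑ k ∈ Finset.range (n+2),
              P[fun ω => f k ω * g k ω | ℱ n] := by
            have : D = ∑ k ∈ Finset.range (n+2), fun ω => f k ω * g k ω := by
              funext ω; rw [hD]; simp
            rw [this]
            exact condExp_finset_sum (fun k _ => hfgint k) _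
          refine h1.trans ?_
          have h2 : ∀ k ∈ Finset.range (n+2),
              P[fun ω => f k ω * g k ω | ℱ n] =ᵐ[P] fun ω => f k ω * ((k:ℝ)/(n+2)) := by
            intro k hkmem
            exact hfgcond k (by simp only [Finset.mem_range] at hkmem; omega)
          have h3 := eventuallyEq_sum h2
          refine h3.trans (Eventually.of_forall fun ω => ?_)
          rw [Finset.sum_apply]
          have hmem : B n ω ∈ Finset.range (n+2) := by
            have := (hBub n ω).2; simp only [Finset.mem_range]; omega
          rw [Finset.sum_eq_single (B n ω)]
          · rw [hf]; simp
          · intro b _ hb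
            rw [hf]; simp only []
            rw [if_neg (fun h => hb h.symm), zero_mul]
          · intro h; exact absurd hmem h
        filter_upwards [hadd, hbb, hDsum] with ω h1 h2 h3
        simp only [Pi.smul_apply, smul_eq_mul]
        rw [h1]
        simp only [Pi.add_apply]
        rw [h2, h3, hM]
        field_simp
        ring

lemma polya_law (U : ℕ → Ω → ℝ) (hUmeas : ∀ n, Measurable (U n))
    (hUlaw : ∀ n, Measure.map (U n) P = volume.restrict (Set.Icc (0 : ℝ) 1))
    (B : ℕ → Ω → ℕ) (hB0 : ∀ ω, B 0 ω = 1)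
    (hBrec : ∀ n ω, B (n + 1) ω =
      if U (n + 1) ω < (B n ω : ℝ) / (n + 2) then B n ω + 1 else B n ω)
    (hBub : ∀ n ω, 1 ≤ B n ω ∧ B n ω ≤ n + 1)
    (ℱ : Filtration ℕ ‹MeasurableSpace Ω›)
    (hBadp : ∀ n, Measurable[ℱ n] (B n))
    (hindep : ∀ n, Indep (ℱ n) (MeasurableSpace.comap (U (n + 1)) inferInstance) P) :
    ∀ n k, P {ω | B n ω = k} =
      if 1 ≤ k ∧ k ≤ n + 1 then ((n + 1 : ℕ) : ℝ≥0∞)⁻¹ else 0 := by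
  classical
  intro n
  induction n with
  | zero =>
    intro k
    by_cases hk : k = 1
    · subst hk
      have : {ω | B 0 ω = 1} = Set.univ := by ext ω; simp [hB0]
      rw [this]; simp
    · have : {ω | B 0 ω = k} = ∅ := by ext ω; simp [hB0]; omega
      rw [this]
      simp only [measure_empty]
      rw [if_neg (by omega)]
  | succ n ih =>
    intro k
    -- first deal with k = 0 and k > n + 2
    by_cases hk0 : k = 0
    · subst hk0
      have : {ω | B (n+1) ω = 0} = ∅ := by
        ext ω; simp only [Set.mem_setOf_eq, Set.mem_empty_iff_false, iff_false]
        have := (hBub (n+1) ω).1; omega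
      rw [this]; simp
    obtain ⟨j, rfl⟩ : ∃ j, k = j + 1 := ⟨k - 1, by omega⟩
    -- decompose the event
    have hdec : {ω | B (n+1) ω = j + 1} =
        ({ω | B n ω = j} ∩ {ω | U (n+1) ω < (j : ℝ)/(n+2)}) ∪
        ({ω | B n ω = j + 1} ∩ {ω | ¬ U (n+1) ω < ((j : ℝ)+1)/(n+2)}) := by
      ext ω
      simp only [Set.mem_setOf_eq, Set.mem_union, Set.mem_inter_iff]
      rw [hBrec n ω]
      by_cases h : U (n + 1) ω < (B n ω : ℝ) / (n + 2)
      · rw [if_pos h]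
        constructor
        · intro he
          have hBj : B n ω = j := by omega
          left
          refine ⟨hBj, ?_⟩
          rw [← hBj]; push_cast; exact h
        · rintro (⟨h1, _⟩ | ⟨h1, h2⟩)
          · omega
          · exfalso; apply h2; rw [h1] at h; push_cast at h; exact h
      · rw [if_neg h]
        constructor
        · intro he
          right
          refine ⟨he, ?_⟩
          rw [he] at h; push_cast at h; exact h
        · rintro (⟨h1, h2⟩ | ⟨h1, _⟩)
          · exfalso; apply h; rw [h1]; push_cast; exact h2
          · exact h1
    -- the two pieces are disjoint
    have hdisj : Disjoint ({ω | B n ω = j} ∩ {ω | U (n+1) ω < (j : ℝ)/(n+2)})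
        ({ω | B n ω = j + 1} ∩ {ω | ¬ U (n+1) ω < ((j : ℝ)+1)/(n+2)}) := by
      rw [Set.disjoint_left]
      rintro ω ⟨h1, -⟩ ⟨h2, -⟩
      simp only [Set.mem_setOf_eq] at h1 h2
      omega
    -- measurability
    have hBset : ∀ m i, MeasurableSet {ω | B m ω = i} := fun m i =>
      ((hBadp m).mono (ℱ.le m) le_rfl) (measurableSet_singleton i)
    have hUlt : ∀ c : ℝ, MeasurableSet {ω | U (n+1) ω < c} := fun c =>
      measurableSet_lt (hUmeas (n+1)) measurable_const
    -- independence products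
    have hIndep := hindep n
    rw [Indep_iff] at hIndep
    have hprod1 : P ({ω | B n ω = j} ∩ {ω | U (n+1) ω < (j : ℝ)/(n+2)}) =
        P {ω | B n ω = j} * P {ω | U (n+1) ω < (j : ℝ)/(n+2)} := by
      refine hIndep _ _ (hBadp n (measurableSet_singleton j)) ?_
      exact ⟨Set.Iio _, measurableSet_Iio, rfl⟩
    have hprod2 : P ({ω | B n ω = j + 1} ∩ {ω | ¬ U (n+1) ω < ((j : ℝ)+1)/(n+2)}) =
        P {ω | B n ω = j + 1} * P {ω | ¬ U (n+1) ω < ((j : ℝ)+1)/(n+2)} := by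
      refine hIndep _ _ (hBadp n (measurableSet_singleton (j+1))) ?_
      refine ⟨Set.Ici (((j:ℝ)+1)/((n:ℝ)+2)), measurableSet_Ici, ?_⟩
      ext ω; simp [not_lt]
    rw [hdec, measure_union hdisj ((hBset n (j+1)).inter (by exact (hUlt (((j:ℝ)+1)/((n:ℝ)+2))).compl)),
      hprod1, hprod2, ih j, ih (j+1)]
    -- now case analysis on j
    by_cases hjle : j ≤ n + 1
    swap
    · -- j ≥ n + 2 : both terms vanish
      have hA : ¬(1 ≤ j ∧ j ≤ n + 1) := by omega
      have hB : ¬(1 ≤ j + 1 ∧ j + 1 ≤ n + 1) := by omega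
      have hC : ¬(1 ≤ j + 1 ∧ j + 1 ≤ n + 1 + 1) := by omega
      rw [if_neg hA, if_neg hB, if_neg hC]
      simp
    have hC : 1 ≤ j + 1 ∧ j + 1 ≤ n + 1 + 1 := by omega
    rw [if_pos hC]
    by_cases hj0 : j = 0
    · subst hj0
      have hA : ¬(1 ≤ 0 ∧ 0 ≤ n + 1) := by omega
      have hB : 1 ≤ 0 + 1 ∧ 0 + 1 ≤ n + 1 := by omega
      rw [if_neg hA, if_pos hB]
      rw [measure_ge_of_unif (hUmeas (n+1)) (hUlaw (n+1))
        (by positivity) (by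
          rw [div_le_one (by positivity)]
          have : (0:ℝ) ≤ (n:ℝ) := Nat.cast_nonneg n
          push_cast; linarith)]
      have h1 : (1 : ℝ) - (((0:ℕ):ℝ)+1)/((n:ℝ)+2) = ((n+1 : ℕ) : ℝ)/((n+2 : ℕ) : ℝ) := by
        push_cast; field_simp; ring
      rw [zero_mul, zero_add, h1, ennreal_aux (n+1) (n+2) (by omega) (by omega)]
    by_cases hjtop : j = n + 1
    · subst hjtop
      have hA : 1 ≤ n + 1 ∧ n + 1 ≤ n + 1 := by omega
      have hB : ¬(1 ≤ n + 1 + 1 ∧ n + 1 + 1 ≤ n + 1) := by omega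
      rw [if_pos hA, if_neg hB]
      rw [measure_lt_of_unif (hUmeas (n+1)) (hUlaw (n+1))
        (by positivity)
        (by rw [div_le_one (by positivity)]; push_cast; linarith)]
      have h1 : ((n+1 : ℕ) : ℝ)/((n:ℝ)+2) = ((n+1 : ℕ) : ℝ)/((n+2 : ℕ) : ℝ) := by push_cast; ring_nf
      rw [h1, ennreal_aux (n+1) (n+2) (by omega) (by omega), zero_mul, add_zero]
    · -- middle case 1 ≤ j ≤ n
      have hA : 1 ≤ j ∧ j ≤ n + 1 := by omega
      have hB : 1 ≤ j + 1 ∧ j + 1 ≤ n + 1 := by omega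
      rw [if_pos hA, if_pos hB]
      rw [measure_lt_of_unif (hUmeas (n+1)) (hUlaw (n+1))
        (by positivity)
        (by rw [div_le_one (by positivity)]
            have : (j:ℝ) ≤ (n:ℝ) + 1 := by exact_mod_cast hjle
            linarith),
        measure_ge_of_unif (hUmeas (n+1)) (hUlaw (n+1))
        (by positivity)
        (by rw [div_le_one (by positivity)]
            have : (j:ℝ) + 1 ≤ (n:ℝ) + 2 := by
              have : (j:ℝ) ≤ (n:ℝ) + 1 := by exact_mod_cast hjle
              linarith
            linarith)]
      rw [← mul_add, ← ENNReal.ofReal_add (by positivity)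
        (by
          have hj1 : (j:ℝ) + 1 ≤ (n:ℝ) + 2 := by
            have : (j:ℝ) ≤ (n:ℝ) + 1 := by exact_mod_cast hjle
            linarith
          have hpos : (0:ℝ) < (n:ℝ) + 2 := by positivity
          rw [sub_nonneg, div_le_one hpos]
          exact hj1)]
      have h1 : (j:ℝ)/((n:ℝ)+2) + (1 - ((j:ℝ)+1)/((n:ℝ)+2)) = ((n+1 : ℕ) : ℝ)/((n+2 : ℕ) : ℝ) := by
        push_cast; field_simp; ring
      rw [h1, ennreal_aux (n+1) (n+2) (by omega) (by omega)]

lemma polya_cdf (B : ℕ → Ω → ℕ)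
    (hBub : ∀ n ω, 1 ≤ B n ω ∧ B n ω ≤ n + 1)
    (hBmeas : ∀ n, Measurable (B n))
    (hlaw : ∀ n k, P {ω | B n ω = k} =
      if 1 ≤ k ∧ k ≤ n + 1 then ((n + 1 : ℕ) : ℝ≥0∞)⁻¹ else 0) :
    ∀ t : ℝ, t ∈ Set.Ioo (0:ℝ) 1 →
      Tendsto (fun n => P {ω | (B n ω : ℝ) / (n + 2) ≤ t}) atTop (nhds (ENNReal.ofReal t)) := by
  classical
  -- step 1: P {B n ≤ m} = min m (n+1) / (n+1)
  have hcount : ∀ n m : ℕ, P {ω | B n ω ≤ m} =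
      ((min m (n+1) : ℕ) : ℝ≥0∞) * ((n + 1 : ℕ) : ℝ≥0∞)⁻¹ := by
    intro n m
    have hdec : {ω | B n ω ≤ m} = ⋃ k ∈ Finset.range (m+1), {ω | B n ω = k} := by
      ext ω
      simp only [Set.mem_setOf_eq, Set.mem_iUnion, Finset.mem_range, exists_prop]
      constructor
      · intro h; exact ⟨B n ω, by omega, rfl⟩
      · rintro ⟨k, hk, h⟩; omega
    have hdisj : Set.PairwiseDisjoint (Finset.range (m+1) : Set ℕ)
        (fun k => {ω | B n ω = k}) := by
      intro a _ b _ hab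
      rw [Function.onFun, Set.disjoint_left]
      rintro ω h1 h2
      simp only [Set.mem_setOf_eq] at h1 h2
      omega
    have hms : ∀ k ∈ Finset.range (m+1), MeasurableSet {ω | B n ω = k} := fun k _ =>
      (hBmeas n) (measurableSet_singleton k)
    rw [hdec, measure_biUnion_finset hdisj hms]
    have : ∀ k ∈ Finset.range (m+1), P {ω | B n ω = k} =
        if 1 ≤ k ∧ k ≤ n + 1 then ((n + 1 : ℕ) : ℝ≥0∞)⁻¹ else 0 := fun k _ => hlaw n k
    rw [Finset.sum_congr rfl this, Finset.sum_ite, Finset.sum_const, Finset.sum_const,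
      smul_zero, add_zero]
    have hcard : (Finset.filter (fun k => 1 ≤ k ∧ k ≤ n + 1) (Finset.range (m+1))).card
        = min m (n+1) := by
      have : Finset.filter (fun k => 1 ≤ k ∧ k ≤ n + 1) (Finset.range (m+1))
          = Finset.Icc 1 (min m (n+1)) := by
        ext k
        simp only [Finset.mem_filter, Finset.mem_range, Finset.mem_Icc, le_min_iff,
          Nat.lt_succ_iff]
        omega
      rw [this, Nat.card_Icc]
      omega
    rw [hcard, nsmul_eq_mul]
  -- step 2: rewrite the event
  intro t ht
  obtain ⟨ht0, ht1⟩ := ht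
  have hev : ∀ n : ℕ, {ω | (B n ω : ℝ) / (n + 2) ≤ t} = {ω | B n ω ≤ ⌊t * ((n:ℝ) + 2)⌋₊} := by
    intro n
    ext ω
    simp only [Set.mem_setOf_eq]
    rw [div_le_iff₀ (by positivity), Nat.le_floor_iff (by positivity)]
  -- step 3: eventually the floor is at most n+1
  have h1t : (0:ℝ) < 1 - t := by linarith
  have hfloor_le : ∀ᶠ n : ℕ in atTop, ⌊t * ((n:ℝ) + 2)⌋₊ ≤ n + 1 := by
    have hev' : ∀ᶠ n : ℕ in atTop, 1/(1-t) - 2 ≤ (n:ℝ) :=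
      (tendsto_natCast_atTop_atTop (R := ℝ)).eventually_ge_atTop _
    filter_upwards [hev'] with n hn
    have h2 : 1/(1-t) ≤ (n:ℝ) + 2 := by linarith
    have h3 : t * ((n:ℝ) + 2) ≤ ((n+1 : ℕ) : ℝ) := by
      rw [div_le_iff₀ h1t] at h2
      push_cast
      nlinarith
    calc ⌊t * ((n:ℝ) + 2)⌋₊ ≤ ⌊((n+1 : ℕ) : ℝ)⌋₊ := Nat.floor_le_floor h3
      _ = n + 1 := Nat.floor_natCast _
  -- step 4: the real sequence converges
  have hreal : Tendsto (fun n : ℕ => (⌊t * ((n:ℝ) + 2)⌋₊ : ℝ) / ((n:ℝ) + 1)) atTop (nhds t) := by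
    have hone : Tendsto (fun n : ℕ => 1 / ((n:ℝ) + 1)) atTop (nhds 0) :=
      tendsto_one_div_add_atTop_nhds_zero_nat
    have hlow : Tendsto (fun n : ℕ => t + (t - 1) * (1 / ((n:ℝ) + 1))) atTop (nhds t) := by
      have := hone.const_mul (t - 1)
      have h2 := this.const_add t
      simpa using h2
    have hhigh : Tendsto (fun n : ℕ => t + t * (1 / ((n:ℝ) + 1))) atTop (nhds t) := by
      have := hone.const_mul t
      have h2 := this.const_add t
      simpa using h2
    refine tendsto_of_tendsto_of_tendsto_of_le_of_le hlow hhigh ?_ ?_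
    · intro n
      have hlb : t * ((n:ℝ) + 2) - 1 ≤ (⌊t * ((n:ℝ) + 2)⌋₊ : ℝ) := by
        have := Nat.lt_floor_add_one (t * ((n:ℝ) + 2))
        linarith
      rw [le_div_iff₀ (by positivity)]
      have hexp : (t + (t - 1) * (1 / ((n:ℝ) + 1))) * ((n:ℝ) + 1) = t * ((n:ℝ) + 2) - 1 := by
        field_simp
        ring
      rw [hexp]
      exact hlb
    · intro n
      have hub : (⌊t * ((n:ℝ) + 2)⌋₊ : ℝ) ≤ t * ((n:ℝ) + 2) := Nat.floor_le (by positivity)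
      rw [div_le_iff₀ (by positivity)]
      have hexp : (t + t * (1 / ((n:ℝ) + 1))) * ((n:ℝ) + 1) = t * ((n:ℝ) + 2) := by
        field_simp
        ring
      rw [hexp]
      exact hub
  -- step 5: conclude in ℝ≥0∞
  have hEN : Tendsto (fun n : ℕ => ENNReal.ofReal ((⌊t * ((n:ℝ) + 2)⌋₊ : ℝ) / ((n:ℝ) + 1)))
      atTop (nhds (ENNReal.ofReal t)) :=
    (ENNReal.continuous_ofReal.tendsto t).comp hreal
  refine hEN.congr' ?_
  filter_upwards [hfloor_le] with n hn
  rw [hev n, hcount n _, min_eq_left hn, cast_mul_inv_eq _ (n+1) (by omega)]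
  push_cast
  ring_nf

lemma polya_final (M : ℕ → Ω → ℝ) (hMmeas : ∀ n, Measurable (M n)) (Z : Ω → ℝ) (hZmeas : Measurable Z)
    (htend : ∀ᵐ ω ∂P, Tendsto (fun n => M n ω) atTop (nhds (Z ω)))
    (hZ01 : ∀ᵐ ω ∂P, 0 ≤ Z ω ∧ Z ω ≤ 1)
    (hcdf : ∀ t : ℝ, t ∈ Set.Ioo (0:ℝ) 1 →
      Tendsto (fun n => P {ω | M n ω ≤ t}) atTop (nhds (ENNReal.ofReal t))) :
    Measure.map Z P = volume.restrict (Set.Icc (0 : ℝ) 1) := by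
  classical
  set G : Set Ω := {ω | Tendsto (fun n => M n ω) atTop (nhds (Z ω))} with hG
  have hGc : P Gᶜ = 0 := ae_iff.mp htend
  have hinterG : ∀ s : Set Ω, P (s ∩ G) = P s := fun s =>
    measure_inter_conull' (measure_mono_null (Set.diff_subset_compl s G) hGc)
  have hAmeas : ∀ (t : ℝ) (n : ℕ), MeasurableSet {ω | M n ω ≤ t} := fun t n =>
    measurableSet_le (hMmeas n) measurable_const
  -- upper bound for P (Z < t)
  have hup : ∀ t : ℝ, t ∈ Set.Ioo (0:ℝ) 1 → P {ω | Z ω < t} ≤ ENNReal.ofReal t := by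
    intro t ht
    set I : ℕ → Set Ω := fun N => ⋂ n, ⋂ (_ : N ≤ n), {ω | M n ω ≤ t} with hI
    have hIm : Monotone I := by
      intro N N' hNN'
      exact Set.iInter₂_mono' fun n hn => ⟨n, le_trans hNN' hn, le_rfl⟩
    have hsub : {ω | Z ω < t} ∩ G ⊆ ⋃ N, I N := by
      rintro ω ⟨h1, h2⟩
      simp only [Set.mem_setOf_eq] at h1
      have h2' : Tendsto (fun n => M n ω) atTop (nhds (Z ω)) := h2
      have hev : ∀ᶠ n in atTop, M n ω < t := h2'.eventually_lt_const h1
      obtain ⟨N, hN⟩ := eventually_atTop.mp hev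
      refine Set.mem_iUnion.mpr ⟨N, ?_⟩
      exact Set.mem_iInter₂.mpr fun n hn => (hN n hn).le
    have hIbound : ∀ N, P (I N) ≤ ENNReal.ofReal t := by
      intro N
      refine ge_of_tendsto (hcdf t ht) ?_
      filter_upwards [eventually_ge_atTop N] with n hn
      exact measure_mono (Set.iInter₂_subset n hn)
    calc P {ω | Z ω < t} = P ({ω | Z ω < t} ∩ G) := (hinterG _).symm
      _ ≤ P (⋃ N, I N) := measure_mono hsub
      _ ≤ ENNReal.ofReal t := by
          refine le_of_tendsto (tendsto_measure_iUnion_atTop hIm) ?_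
          exact Eventually.of_forall hIbound
  -- lower bound for P (Z ≤ t)
  have hlo : ∀ t : ℝ, t ∈ Set.Ioo (0:ℝ) 1 → ENNReal.ofReal t ≤ P {ω | Z ω ≤ t} := by
    intro t ht
    set S : ℕ → Set Ω := fun N => ⋃ n, ⋃ (_ : N ≤ n), {ω | M n ω ≤ t} with hS
    have hSm : Antitone S := by
      intro N N' hNN'
      exact Set.iUnion₂_mono' fun n hn => ⟨n, le_trans hNN' hn, le_rfl⟩
    have hSmeas : ∀ N, MeasurableSet (S N) := fun N =>
      MeasurableSet.iUnion fun n => MeasurableSet.iUnion fun _ => hAmeas t n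
    have hSbound : ∀ N, ENNReal.ofReal t ≤ P (S N) := by
      intro N
      refine le_of_tendsto (hcdf t ht) ?_
      filter_upwards [eventually_ge_atTop N] with n hn
      exact measure_mono (Set.subset_iUnion₂ (s := fun n (_ : N ≤ n) => {ω | M n ω ≤ t}) n hn)
    have htends : Tendsto (fun N => P (S N)) atTop (nhds (P (⋂ N, S N))) := by
      refine tendsto_measure_iInter_atTop (fun N => (hSmeas N).nullMeasurableSet) hSm ⟨0, ?_⟩
      exact (measure_lt_top P _).ne
    have hlim : ENNReal.ofReal t ≤ P (⋂ N, S N) :=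
      ge_of_tendsto htends (Eventually.of_forall hSbound)
    have hsub : (⋂ N, S N) ∩ G ⊆ {ω | Z ω ≤ t} := by
      rintro ω ⟨h1, h2⟩
      have h2' : Tendsto (fun n => M n ω) atTop (nhds (Z ω)) := h2
      simp only [Set.mem_setOf_eq]
      by_contra hcon
      push_neg at hcon
      have hev : ∀ᶠ n in atTop, t < M n ω := h2'.eventually_const_lt hcon
      obtain ⟨N, hN⟩ := eventually_atTop.mp hev
      have hωS : ω ∈ S N := Set.mem_iInter.mp h1 N
      obtain ⟨n, hn, hωn⟩ := Set.mem_iUnion₂.mp hωS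
      exact absurd (hN n hn) (not_lt.mpr hωn)
    calc ENNReal.ofReal t ≤ P (⋂ N, S N) := hlim
      _ = P ((⋂ N, S N) ∩ G) := (hinterG _).symm
      _ ≤ P {ω | Z ω ≤ t} := measure_mono hsub
  -- conclusion via CDFs
  have h0 : P {ω | ¬(0 ≤ Z ω ∧ Z ω ≤ 1)} = 0 := ae_iff.mp hZ01
  have hseq : ∀ t : ℝ, 0 ≤ t → t < 1 → P {ω | Z ω ≤ t} ≤ ENNReal.ofReal t := by
    intro t ht0 ht1
    set s : ℕ → ℝ := fun m => t + (1 - t) / (m + 2) with hs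
    have hs_mem : ∀ m, s m ∈ Set.Ioo (0:ℝ) 1 := by
      intro m
      have h1 : (0:ℝ) < 1 - t := by linarith
      have h2 : (0:ℝ) < (m:ℝ) + 2 := by positivity
      constructor
      · have : 0 < (1 - t) / ((m:ℝ) + 2) := by positivity
        simp only [hs]; linarith
      · have : (1 - t) / ((m:ℝ) + 2) < 1 - t := by
          rw [div_lt_iff₀ h2]
          nlinarith
        simp only [hs]; linarith
    have hs_tend : Tendsto s atTop (nhds t) := by
      have h2 : Tendsto (fun m : ℕ => ((m:ℝ) + 2)) atTop atTop :=
        tendsto_atTop_add_const_right _ _ tendsto_natCast_atTop_atTop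
      have h3 : Tendsto (fun m : ℕ => ((m:ℝ) + 2)⁻¹) atTop (nhds 0) :=
        tendsto_inv_atTop_zero.comp h2
      have h4 : Tendsto (fun m : ℕ => t + (1 - t) * ((m:ℝ) + 2)⁻¹) atTop (nhds (t + (1-t)*0)) :=
        (tendsto_const_nhds.mul h3).const_add t
      simp only [mul_zero, add_zero] at h4
      refine h4.congr fun m => ?_
      simp only [hs, div_eq_mul_inv]
    refine ge_of_tendsto ((ENNReal.continuous_ofReal.tendsto t).comp hs_tend) ?_
    refine Eventually.of_forall fun m => ?_
    calc P {ω | Z ω ≤ t} ≤ P {ω | Z ω < s m} := by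
          refine measure_mono fun ω hω => ?_
          simp only [Set.mem_setOf_eq] at *
          have : t < s m := by
            have h1 : (0:ℝ) < 1 - t := by linarith
            have h2 : (0:ℝ) < ((m:ℝ) + 2) := by positivity
            have h3 : 0 < (1 - t) / ((m:ℝ) + 2) := by positivity
            have hsm : s m = t + (1 - t) / ((m:ℝ) + 2) := rfl
            rw [hsm]; linarith
          linarith
      _ ≤ ENNReal.ofReal (s m) := hup (s m) (hs_mem m)
  haveI : IsProbabilityMeasure (Measure.map Z P) := Measure.isProbabilityMeasure_map hZmeas.aemeasurable
  refine Measure.ext_of_Iic (Measure.map Z P) _ fun t => ?_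
  rw [Measure.map_apply hZmeas measurableSet_Iic, Measure.restrict_apply measurableSet_Iic]
  have hpre : Z ⁻¹' Set.Iic t = {ω | Z ω ≤ t} := rfl
  rw [hpre]
  rcases lt_or_ge t 0 with htneg | ht0
  · -- t < 0
    have hrhs : Set.Iic t ∩ Set.Icc (0:ℝ) 1 = ∅ := by
      ext x
      simp only [Set.mem_inter_iff, Set.mem_Iic, Set.mem_Icc, Set.mem_empty_iff_false,
        iff_false, not_and]
      intro h1 h2
      intro h3
      linarith
    rw [hrhs, measure_empty]
    refine measure_mono_null ?_ h0
    intro ω hω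
    simp only [Set.mem_setOf_eq] at *
    intro hc
    linarith [hc.1]
  rcases lt_or_ge t 1 with ht1 | ht1
  · -- 0 ≤ t < 1
    have hrhs : Set.Iic t ∩ Set.Icc (0:ℝ) 1 = Set.Icc 0 t := by
      ext x
      simp only [Set.mem_inter_iff, Set.mem_Iic, Set.mem_Icc]
      constructor
      · rintro ⟨h1, h2, h3⟩; exact ⟨h2, h1⟩
      · rintro ⟨h1, h2⟩; exact ⟨h2, h1, by linarith⟩
    rw [hrhs, Real.volume_Icc, sub_zero]
    refine le_antisymm (hseq t ht0 ht1) ?_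
    rcases eq_or_lt_of_le ht0 with heq | htpos
    · rw [← heq]; simp
    · exact hlo t ⟨htpos, ht1⟩
  · -- t ≥ 1
    have hrhs : Set.Iic t ∩ Set.Icc (0:ℝ) 1 = Set.Icc 0 1 := by
      ext x
      simp only [Set.mem_inter_iff, Set.mem_Iic, Set.mem_Icc]
      constructor
      · rintro ⟨h1, h2, h3⟩; exact ⟨h2, h3⟩
      · rintro ⟨h1, h2⟩; exact ⟨by linarith, h1, h2⟩
    rw [hrhs, Real.volume_Icc, sub_zero, ENNReal.ofReal_one]
    have hcomplnull : P {ω | Z ω ≤ t}ᶜ = 0 := by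
      refine measure_mono_null ?_ h0
      intro ω hω
      simp only [Set.mem_compl_iff, Set.mem_setOf_eq, not_le] at hω
      simp only [Set.mem_setOf_eq]
      intro hc
      linarith [hc.2]
    have hmeasset : MeasurableSet {ω | Z ω ≤ t} := measurableSet_le hZmeas measurable_const
    have := measure_add_measure_compl (μ := P) hmeasset
    rw [hcomplnull, add_zero, measure_univ] at this
    exact this

end PolyaUrnAux


open PolyaUrnAux in
/-- **Polya urn: the proportion of black balls converges a.s. to a Uniform[0,1] limit.**
Start with one black and one white ball; at each step a ball is chosen uniformly at random
and returned together with one additional ball of the same colour.  The urn is realised by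
i.i.d. uniform random variables `U_n` on `[0,1]`: with `B_n` black balls among the `n + 2`
balls present after `n` steps, a black ball is drawn at step `n+1` iff `U_{n+1} < B_n/(n+2)`.
Then the proportion `B_n/(n+2)` converges almost surely to a random variable which is
uniformly distributed on `[0,1]` (i.e. `Beta(1,1)` distributed). -/
theorem polya_urn_proportion_tendsto_uniform
    {Ω : Type*} [MeasurableSpace Ω] (P : Measure Ω) [IsProbabilityMeasure P]
    (U : ℕ → Ω → ℝ) (hUmeas : ∀ n, Measurable (U n))
    -- the U_n are independent ...
    (hUindep : ProbabilityTheory.iIndepFun U P)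
    -- ... and uniformly distributed on [0,1]
    (hUlaw : ∀ n, Measure.map (U n) P = volume.restrict (Set.Icc (0 : ℝ) 1))
    -- the number of black balls: B_0 = 1, and at each step a black ball is added iff a
    -- black ball is drawn, which happens with conditional probability B_n/(n+2)
    (B : ℕ → Ω → ℕ) (hB0 : ∀ ω, B 0 ω = 1)
    (hBrec : ∀ n ω, B (n + 1) ω =
      if U (n + 1) ω < (B n ω : ℝ) / (n + 2) then B n ω + 1 else B n ω) :
    ∃ Z : Ω → ℝ, Measurable Z ∧
      Measure.map Z P = volume.restrict (Set.Icc (0 : ℝ) 1) ∧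
      ∀ᵐ ω ∂P, Filter.Tendsto (fun n => (B n ω : ℝ) / (n + 2)) Filter.atTop (nhds (Z ω)) := by
  classical
  set M : ℕ → Ω → ℝ := fun n ω => (B n ω : ℝ) / (n + 2) with hM
  have hBub : ∀ n ω, 1 ≤ B n ω ∧ B n ω ≤ n + 1 := by
    intro n
    induction n with
    | zero => intro ω; rw [hB0]; omega
    | succ n ih => intro ω; rw [hBrec]; have := ih ω; split <;> omega
  have hM01 : ∀ n ω, 0 ≤ M n ω ∧ M n ω ≤ 1 := by
    intro n ω
    have h1 := (hBub n ω).1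
    have h2 := (hBub n ω).2
    constructor
    · positivity
    · rw [hM, div_le_one (by positivity)]
      have : (B n ω : ℝ) ≤ (n : ℝ) + 1 := by exact_mod_cast h2
      linarith
  set ℱ : Filtration ℕ ‹MeasurableSpace Ω› :=
    Filtration.natural U (fun n => (hUmeas n).stronglyMeasurable) with hℱ
  have hUadp : ∀ n, Measurable[ℱ n] (U n) := fun n =>
    (Filtration.stronglyAdapted_natural (fun n => (hUmeas n).stronglyMeasurable) n).measurable
  have hBadp : ∀ n, Measurable[ℱ n] (B n) := by
    intro n
    induction n with
    | zero =>
      have : B 0 = fun _ => 1 := funext hB0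
      rw [this]; exact measurable_const
    | succ n ih =>
      have hBn : Measurable[ℱ (n+1)] (B n) := ih.mono (ℱ.mono (Nat.le_succ n)) le_rfl
      have hUn : Measurable[ℱ (n+1)] (U (n+1)) := hUadp (n+1)
      have hs : MeasurableSet[ℱ (n+1)] {ω | U (n + 1) ω < (B n ω : ℝ) / (n + 2)} :=
        measurableSet_lt hUn ((measurable_from_top.comp hBn).div_const _)
      have : B (n+1) = fun ω =>
          if U (n + 1) ω < (B n ω : ℝ) / (n + 2) then B n ω + 1 else B n ω :=
        funext (hBrec n)
      rw [this]
      exact Measurable.ite hs (hBn.add_const 1) hBn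
  have hBmeas : ∀ n, Measurable (B n) := fun n => (hBadp n).mono (ℱ.le n) le_rfl
  have hindep : ∀ n, Indep (ℱ n) (MeasurableSpace.comap (U (n + 1)) inferInstance) P := by
    intro n
    have h := ProbabilityTheory.indep_iSup_of_disjoint
      (fun i => (hUmeas i).comap_le) hUindep
      (S := Set.Iic n) (T := {n+1}) (by simp [Set.disjoint_left]; omega)
    have h1 : (⨆ i ∈ Set.Iic n, MeasurableSpace.comap (U i) inferInstance) = ℱ n := rfl
    have h2 : (⨆ i ∈ ({n+1} : Set ℕ), MeasurableSpace.comap (U i) inferInstance)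
        = MeasurableSpace.comap (U (n+1)) inferInstance := by
      simp
    rwa [h1, h2] at h
  -- key ingredients from the auxiliary lemmas
  have hmart : Martingale M ℱ P :=
    polya_martingale U hUmeas hUlaw B hBrec hBub ℱ hBadp hUadp hindep
  have hlaw : ∀ n k, P {ω | B n ω = k} =
      if 1 ≤ k ∧ k ≤ n + 1 then ((n + 1 : ℕ) : ℝ≥0∞)⁻¹ else 0 :=
    polya_law U hUmeas hUlaw B hB0 hBrec hBub ℱ hBadp hindep
  have hcdf : ∀ t : ℝ, t ∈ Set.Ioo (0:ℝ) 1 →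
      Tendsto (fun n => P {ω | M n ω ≤ t}) atTop (nhds (ENNReal.ofReal t)) :=
    polya_cdf B hBub hBmeas hlaw
  -- almost sure convergence
  set Z : Ω → ℝ := ℱ.limitProcess M P with hZ
  have hZmeas : Measurable Z :=
    (MeasureTheory.Filtration.stronglyMeasurable_limit_process').measurable
  have hMadp : ∀ n, Measurable[ℱ n] (M n) := fun n =>
    (measurable_from_top.comp (hBadp n)).div_const _
  have hMmeas : ∀ n, Measurable (M n) := fun n => (hMadp n).mono (ℱ.le n) le_rfl
  have htend : ∀ᵐ ω ∂P, Tendsto (fun n => M n ω) atTop (nhds (Z ω)) := by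
    refine hmart.submartingale.ae_tendsto_limitProcess (R := 1) fun n => ?_
    have := eLpNorm_le_of_ae_bound (p := 1) (μ := P) (f := M n) (C := 1)
      (Eventually.of_forall fun ω => by
        rw [Real.norm_eq_abs, abs_of_nonneg (hM01 n ω).1]; exact (hM01 n ω).2)
    simpa using this
  have hZ01 : ∀ᵐ ω ∂P, 0 ≤ Z ω ∧ Z ω ≤ 1 := by
    filter_upwards [htend] with ω hω
    constructor
    · exact ge_of_tendsto hω (Eventually.of_forall fun n => (hM01 n ω).1)
    · exact le_of_tendsto hω (Eventually.of_forall fun n => (hM01 n ω).2)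
  have hmap : Measure.map Z P = volume.restrict (Set.Icc (0 : ℝ) 1) :=
    polya_final M hMmeas Z hZmeas htend hZ01 hcdf
  exact ⟨Z, hZmeas, hmap, htend⟩
end

section
/- Let α > 1, β > 0 and 0 < p < 1. Define F(t) = (1−p)e^{βt} for t ≤ 0 and F(t) = 1 − pe^{−αt} for t > 0, and define G(t) = (p/(1−p) + 1)^{−1−β/α} e^{βt} for t < 0 and G(t) = (p/(1−p)·e^{−αt} + 1)^{−1−β/α} for t ≥ 0. Then G satisfies the integral equation: G(t) = ∫_{−∞}^0 G(t−z) dF(z) + (F(t) − F(0)) G(t) for t ≥ 0, and G(t) = ∫_{−∞}^t G(t−z) dF(z) for t < 0, where the integrals are with respect to the Lebesgue–Stieltjes measure of F. -/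
open MeasureTheory Real

/-- The c.d.f. `F(t) = (1−p)e^{βt}` for `t ≤ 0` and `F(t) = 1 − pe^{−αt}` for `t > 0`. -/
noncomputable def Fcdf (α β p : ℝ) (t : ℝ) : ℝ :=
  if t ≤ 0 then (1 - p) * Real.exp (β * t) else 1 - p * Real.exp (-α * t)

/-- The Lebesgue–Stieltjes measure of `F`, given by its density
`(1−p)β e^{βt}` on `(−∞,0]` and `pα e^{−αt}` on `(0,∞)`. -/
noncomputable def FStieltjesMeasure (α β p : ℝ) : Measure ℝ :=
  volume.withDensity fun z =>
    ENNReal.ofReal (if z ≤ 0 then (1 - p) * β * Real.exp (β * z) else p * α * Real.exp (-α * z))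

/-- `G(t) = (p/(1−p) + 1)^{−1−β/α} e^{βt}` for `t < 0` and
`G(t) = (p/(1−p)·e^{−αt} + 1)^{−1−β/α}` for `t ≥ 0`. -/
noncomputable def Gfun (α β p : ℝ) (t : ℝ) : ℝ :=
  if t < 0 then (p / (1 - p) + 1) ^ (-(1 + β / α)) * Real.exp (β * t)
  else (p / (1 - p) * Real.exp (-α * t) + 1) ^ (-(1 + β / α))


open Set Filter Topology ENNReal NNReal

lemma exp_integrableOn_Iic {β : ℝ} (hβ : 0 < β) (a : ℝ) :
    IntegrableOn (fun z => Real.exp (β * z)) (Set.Iic a) := by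
  have h1 : Integrable ((Set.Iic (β * a)).indicator Real.exp) volume :=
    (integrableOn_exp_Iic (β * a)).integrable_indicator measurableSet_Iic
  have h2 := (MeasureTheory.integrable_comp_mul_left_iff
      ((Set.Iic (β * a)).indicator Real.exp) (ne_of_gt hβ)).2 h1
  have h3 : (fun x => (Set.Iic (β * a)).indicator Real.exp (β * x))
      = (Set.Iic a).indicator (fun z => Real.exp (β * z)) := by
    ext x
    by_cases hx : x ≤ a
    · rw [Set.indicator_of_mem (by simpa using (mul_le_mul_iff_right₀ hβ).2 hx),
        Set.indicator_of_mem (by simpa using hx)]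
    · rw [Set.indicator_of_notMem, Set.indicator_of_notMem (by simpa using hx)]
      simp only [Set.mem_Iic, not_le] at hx ⊢
      exact (mul_lt_mul_iff_right₀ hβ).2 hx
  rw [h3] at h2
  exact (integrable_indicator_iff measurableSet_Iic).1 h2

lemma hasDerivAt_H {α β q : ℝ} (hα : 0 < α) (hq : 0 < q) (t z : ℝ) :
    HasDerivAt (fun z => Real.exp (β * z) * (q * Real.exp (-α * (t - z)) + 1) ^ (-(β / α)))
      (β * Real.exp (β * z) * (q * Real.exp (-α * (t - z)) + 1) ^ (-(1 + β / α))) z := by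
  have hbpos : ∀ y : ℝ, 0 < q * Real.exp (-α * (t - y)) + 1 := fun y => by positivity
  have hinner : HasDerivAt (fun y : ℝ => -α * (t - y)) α z := by
    simpa using ((hasDerivAt_id z).const_sub t).const_mul (-α)
  have hb : HasDerivAt (fun y => q * Real.exp (-α * (t - y)) + 1)
      (q * (Real.exp (-α * (t - z)) * α)) z := ((hinner.exp).const_mul q).add_const 1
  have hrpow := hb.rpow_const (p := -(β / α)) (Or.inl (ne_of_gt (hbpos z)))
  have hexp : HasDerivAt (fun y => Real.exp (β * y)) (Real.exp (β * z) * β) z := by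
    simpa using ((hasDerivAt_id z).const_mul β).exp
  have := hexp.mul hrpow
  refine this.congr_deriv ?_
  have hb1 : (q * Real.exp (-α * (t - z)) + 1) ^ (-(β / α))
      = (q * Real.exp (-α * (t - z)) + 1) * (q * Real.exp (-α * (t - z)) + 1) ^ (-(1 + β / α)) := by
    rw [show -(β / α) = 1 + -(1 + β / α) by ring, Real.rpow_add (hbpos z), Real.rpow_one]
  rw [show -(β / α) - 1 = -(1 + β / α) by ring, hb1]
  have hαne : α ≠ 0 := ne_of_gt hα
  field_simp
  ring

lemma tendsto_H {α β q : ℝ} (hα : 0 < α) (hβ : 0 < β) (hq : 0 < q) (t : ℝ) :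
    Tendsto (fun z => Real.exp (β * z) * (q * Real.exp (-α * (t - z)) + 1) ^ (-(β / α)))
      atBot (𝓝 0) := by
  have h1 : Tendsto (fun z : ℝ => Real.exp (β * z)) atBot (𝓝 0) :=
    Real.tendsto_exp_atBot.comp (tendsto_const_mul_atBot_of_pos hβ |>.2 tendsto_id)
  have h2 : Tendsto (fun z : ℝ => -α * (t - z)) atBot atBot := by
    have h := tendsto_atBot_add_const_right atBot (-α * t)
      ((tendsto_const_mul_atBot_of_pos hα).2 tendsto_id)
    exact h.congr fun z => by simp; ring
  have h3 : Tendsto (fun z : ℝ => q * Real.exp (-α * (t - z)) + 1) atBot (𝓝 1) := by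
    have := ((Real.tendsto_exp_atBot.comp h2).const_mul q).add_const 1
    simpa using this
  have h4 : Tendsto (fun z : ℝ => (q * Real.exp (-α * (t - z)) + 1) ^ (-(β / α)))
      atBot (𝓝 1) := by
    have hc : ContinuousAt (fun x : ℝ => x ^ (-(β / α))) 1 :=
      Real.continuousAt_rpow_const 1 _ (Or.inl one_ne_zero)
    have := hc.tendsto.comp h3
    simpa [Function.comp_def] using this
  simpa using h1.mul h4

lemma key_integral (α β p : ℝ) (hα : 0 < α) (hβ : 0 < β) (hp0 : 0 < p) (hp1 : p < 1)
    (t s : ℝ) (hs0 : s ≤ 0) (hst : s ≤ t) :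
    ∫ z in Set.Iic s, Gfun α β p (t - z) ∂(FStieltjesMeasure α β p)
      = (1 - p) * (Real.exp (β * s) * (p / (1 - p) * Real.exp (-α * (t - s)) + 1) ^ (-(β / α))) := by
  have h1p : (0:ℝ) < 1 - p := by linarith
  set q := p / (1 - p) with hqdef
  have hq : 0 < q := div_pos hp0 h1p
  set dens : ℝ → ℝ := fun z => if z ≤ 0 then (1 - p) * β * Real.exp (β * z)
    else p * α * Real.exp (-α * z) with hdens
  have hdens_meas : Measurable dens := by
    apply Measurable.ite (measurableSet_le measurable_id measurable_const) <;> fun_prop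
  have hmeas : Measurable fun z => (dens z).toNNReal := hdens_meas.real_toNNReal
  have hμ : FStieltjesMeasure α β p = volume.withDensity fun z => ((dens z).toNNReal : ℝ≥0∞) := by
    rfl
  rw [hμ, setIntegral_withDensity_eq_setIntegral_smul hmeas _ measurableSet_Iic]
  have hcongr : ∀ z ∈ Set.Iic s, (dens z).toNNReal • Gfun α β p (t - z)
      = (1 - p) * (β * Real.exp (β * z) * (q * Real.exp (-α * (t - z)) + 1) ^ (-(1 + β / α))) := by
    intro z hz
    simp only [Set.mem_Iic] at hz
    have hz0 : z ≤ 0 := hz.trans hs0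
    have htz : ¬ (t - z < 0) := by push_neg; linarith
    rw [NNReal.smul_def, Real.coe_toNNReal _ (by rw [hdens]; simp only [if_pos hz0]; positivity)]
    rw [hdens]
    simp only [if_pos hz0, Gfun, if_neg htz, ← hqdef, smul_eq_mul]
    ring
  rw [setIntegral_congr_fun measurableSet_Iic hcongr, MeasureTheory.integral_const_mul]
  congr 1
  have hbpos : ∀ y : ℝ, 0 < q * Real.exp (-α * (t - y)) + 1 := fun y => by positivity
  have hint : IntegrableOn
      (fun z => β * Real.exp (β * z) * (q * Real.exp (-α * (t - z)) + 1) ^ (-(1 + β / α)))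
      (Set.Iic s) := by
    have hgint : IntegrableOn (fun z => β * Real.exp (β * z)) (Set.Iic s) :=
      (exp_integrableOn_Iic hβ s).const_mul β
    refine Integrable.mono hgint ?_ (ae_of_all _ fun z => ?_)
    · have hcont : Continuous
          (fun z => β * Real.exp (β * z) * (q * Real.exp (-α * (t - z)) + 1) ^ (-(1 + β / α))) := by
        apply Continuous.mul (by fun_prop)
        exact (by fun_prop : Continuous fun z => q * Real.exp (-α * (t - z)) + 1).rpow_const
          fun x => Or.inl (ne_of_gt (hbpos x))
      exact hcont.aestronglyMeasurable
    · rw [Real.norm_of_nonneg (by positivity), Real.norm_of_nonneg (by positivity)]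
      have hle : (q * Real.exp (-α * (t - z)) + 1) ^ (-(1 + β / α)) ≤ 1 :=
        Real.rpow_le_one_of_one_le_of_nonpos (by nlinarith [Real.exp_pos (-α * (t - z))])
          (neg_nonpos.2 (by positivity))
      calc β * Real.exp (β * z) * (q * Real.exp (-α * (t - z)) + 1) ^ (-(1 + β / α))
          ≤ β * Real.exp (β * z) * 1 := by
            apply mul_le_mul_of_nonneg_left hle (by positivity)
        _ = β * Real.exp (β * z) := mul_one _
  have := integral_Iic_of_hasDerivAt_of_tendsto' (a := s)
    (fun x _ => hasDerivAt_H hα hq t x) hint (tendsto_H hα hβ hq t)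
  rw [this, sub_zero]

/-- **`G` solves the integral equation for the law of the maximum (Remark on Example 4).**
Let `α > 1`, `β > 0`, `0 < p < 1`.  Then `G` satisfies
`G(t) = ∫_{−∞}^0 G(t−z) dF(z) + (F(t) − F(0)) G(t)` for `t ≥ 0` and
`G(t) = ∫_{−∞}^t G(t−z) dF(z)` for `t < 0`, where `dF` is the Lebesgue–Stieltjes
measure of `F`. -/
theorem G_solves_integral_equation
    (α β p : ℝ) (hα : 1 < α) (hβ : 0 < β) (hp0 : 0 < p) (hp1 : p < 1) :
    (∀ t : ℝ, 0 ≤ t →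
      Gfun α β p t = (∫ z in Set.Iic (0 : ℝ), Gfun α β p (t - z) ∂(FStieltjesMeasure α β p)) +
        (Fcdf α β p t - Fcdf α β p 0) * Gfun α β p t) ∧
    (∀ t : ℝ, t < 0 →
      Gfun α β p t = ∫ z in Set.Iic t, Gfun α β p (t - z) ∂(FStieltjesMeasure α β p)) := by
  have hα0 : (0:ℝ) < α := by linarith
  have h1p : (0:ℝ) < 1 - p := by linarith
  have hq : 0 < p / (1 - p) := div_pos hp0 h1p
  constructor
  · intro t ht
    rw [key_integral α β p hα0 hβ hp0 hp1 t 0 le_rfl ht]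
    have hF0 : Fcdf α β p 0 = 1 - p := by simp [Fcdf]
    have hFt : Fcdf α β p t = 1 - p * Real.exp (-α * t) := by
      rcases eq_or_lt_of_le ht with h | h
      · rw [Fcdf, if_pos h.symm.le, ← h]; simp
      · rw [Fcdf, if_neg (not_le.2 h)]
    have hGt : Gfun α β p t = (p / (1 - p) * Real.exp (-α * t) + 1) ^ (-(1 + β / α)) := by
      rw [Gfun, if_neg (not_lt.2 ht)]
    rw [hF0, hFt, hGt]
    rw [show β * (0:ℝ) = 0 by ring]
    set E := Real.exp (-α * t) with hE
    have hB : (0:ℝ) < p / (1 - p) * E + 1 := by positivity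
    have hsplit : (p / (1 - p) * E + 1) ^ (-(β / α))
        = (p / (1 - p) * E + 1) * (p / (1 - p) * E + 1) ^ (-(1 + β / α)) := by
      rw [show -(β / α) = 1 + -(1 + β / α) by ring, Real.rpow_add hB, Real.rpow_one]
    rw [show t - (0:ℝ) = t from sub_zero t, ← hE, Real.exp_zero, one_mul, hsplit]
    have hco : (1 - p) * (p / (1 - p) * E + 1) + (1 - p * E - (1 - p)) = 1 := by
      field_simp
      ring
    set X := (p / (1 - p) * E + 1) ^ (-(1 + β / α)) with hX
    calc X = ((1 - p) * (p / (1 - p) * E + 1) + (1 - p * E - (1 - p))) * X := by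
          rw [hco, one_mul]
      _ = (1 - p) * ((p / (1 - p) * E + 1) * X) + (1 - p * E - (1 - p)) * X := by ring
  · intro t ht
    rw [key_integral α β p hα0 hβ hp0 hp1 t t ht.le le_rfl]
    rw [Gfun, if_pos ht]
    rw [show t - t = 0 by ring]
    have h0 : -α * (0:ℝ) = 0 := by ring
    rw [h0, Real.exp_zero, mul_one]
    have hB : (0:ℝ) < p / (1 - p) + 1 := by positivity
    have hsplit : (p / (1 - p) + 1) ^ (-(1 + β / α))
        = (p / (1 - p) + 1)⁻¹ * (p / (1 - p) + 1) ^ (-(β / α)) := by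
      rw [show -(1 + β / α) = -1 + -(β / α) by ring, Real.rpow_add hB, Real.rpow_neg_one]
    have hinv : (p / (1 - p) + 1)⁻¹ = 1 - p := by
      rw [show p / (1 - p) + 1 = (1 - p)⁻¹ by field_simp; ring, inv_inv]
    rw [hsplit, hinv]
    ring
end
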